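/- Let C be a compact subset of the interval [1,2] and let Ĉ := {(1/(c−4), c, c/(c−4)) : c ∈ C} ⊆ ℝ³. Then the intersection of the convex hull of Ĉ with the hyperbolic paraboloid Σ = {(x, y, z) : z = x·y} is exactly Ĉ; that is, (convexHull ℝ Ĉ) ∩ Σ = Ĉ. -/

import Mathlib

/-- Key strict concavity inequality for `g(t) = 1/(t-4)` on `(-∞,4)`. -/
lemma paraboloid_key_ineq {a c : ℝ} (ha : a - 4 < 0) (hc : c - 4 < 0) (hne : c ≠ a) :
    1 / (c - 4) + c * (1 / (a - 4) ^ 2) < 1 / (a - 4) + a * (1 / (a - 4) ^ 2) := by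
  have ha' : a - 4 ≠ 0 := ne_of_lt ha
  have hc' : c - 4 ≠ 0 := ne_of_lt hc
  have hD : (0:ℝ) < (4 - c) * (a - 4) ^ 2 :=
    mul_pos (by linarith) (by positivity)
  have key : ((1 / (a - 4) + a * (1 / (a - 4) ^ 2)) - (1 / (c - 4) + c * (1 / (a - 4) ^ 2)))
      * ((4 - c) * (a - 4) ^ 2) = (a - c) ^ 2 := by
    field_simp
    ring
  have hsq : (0:ℝ) < (a - c) ^ 2 := by
    have : a - c ≠ 0 := fun h => hne (by linarith)
    positivity
  nlinarith [key, hD, hsq]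

theorem convexHull_inter_paraboloid
    (C : Set ℝ) (hC : IsCompact C) (hCsub : C ⊆ Set.Icc (1 : ℝ) 2)
    (Chat : Set (EuclideanSpace ℝ (Fin 3)))
    (hChat : Chat = {q | ∃ c ∈ C,
        q 0 = 1 / (c - 4) ∧ q 1 = c ∧ q 2 = c / (c - 4)})
    (Sig : Set (EuclideanSpace ℝ (Fin 3)))
    (hSig : Sig = {q | q 2 = q 0 * q 1}) :
    (convexHull ℝ Chat) ∩ Sig = Chat := by
  subst hChat hSig
  have hC4 : ∀ c ∈ C, c - 4 < 0 := fun c hc => by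
    have := (hCsub hc).2; linarith
  apply Set.Subset.antisymm
  · rintro q ⟨hq, hqS⟩
    simp only [Set.mem_setOf_eq] at hqS ⊢
    -- the hull lies in the plane z = 4x + 1
    have hplane : q 2 = 4 * q 0 + 1 := by
      have hconv : Convex ℝ {p : EuclideanSpace ℝ (Fin 3) | p 2 = 4 * p 0 + 1} := by
        intro x hx y hy s t hs ht hst
        simp only [Set.mem_setOf_eq] at *
        simp only [PiLp.add_apply, PiLp.smul_apply, smul_eq_mul, hx, hy]
        nlinarith [hst]
      have hsub : {q : EuclideanSpace ℝ (Fin 3) | ∃ c ∈ C,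
          q 0 = 1 / (c - 4) ∧ q 1 = c ∧ q 2 = c / (c - 4)} ⊆
          {p : EuclideanSpace ℝ (Fin 3) | p 2 = 4 * p 0 + 1} := by
        rintro p ⟨c, hcC, h0, h1, h2⟩
        have hc4' : c - 4 ≠ 0 := ne_of_lt (hC4 c hcC)
        simp only [Set.mem_setOf_eq, h0, h2]
        field_simp
        ring
      exact convexHull_min hsub hconv hq
    -- the hull has y-coordinate in [1,2]
    have hy : 1 ≤ q 1 ∧ q 1 ≤ 2 := by
      have hconv : Convex ℝ {p : EuclideanSpace ℝ (Fin 3) | 1 ≤ p 1 ∧ p 1 ≤ 2} := by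
        intro x hx y hy s t hs ht hst
        simp only [Set.mem_setOf_eq] at *
        simp only [PiLp.add_apply, PiLp.smul_apply, smul_eq_mul]
        constructor <;> nlinarith [hx.1, hx.2, hy.1, hy.2]
      have hsub : {q : EuclideanSpace ℝ (Fin 3) | ∃ c ∈ C,
          q 0 = 1 / (c - 4) ∧ q 1 = c ∧ q 2 = c / (c - 4)} ⊆
          {p : EuclideanSpace ℝ (Fin 3) | 1 ≤ p 1 ∧ p 1 ≤ 2} := by
        rintro p ⟨c, hcC, h0, h1, h2⟩
        simp only [Set.mem_setOf_eq, h1]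
        exact ⟨(hCsub hcC).1, (hCsub hcC).2⟩
      exact convexHull_min hsub hconv hq
    set a := q 1 with ha_def
    have ha4 : a - 4 < 0 := by linarith [hy.2]
    have ha4' : a - 4 ≠ 0 := ne_of_lt ha4
    -- from the plane equation and the paraboloid equation: q 0 = 1/(a-4)
    have hq0 : q 0 = 1 / (a - 4) := by
      have : q 0 * (a - 4) = 1 := by nlinarith [hplane, hqS]
      field_simp
      linarith [this]
    have haC : a ∈ C := by
      by_contra haC
      -- C is nonempty since the hull is nonempty
      have hne : C.Nonempty := by
        rcases convexHull_nonempty_iff.mp ⟨q, hq⟩ with ⟨p, c, hcC, _⟩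
        exact ⟨c, hcC⟩
      set k : ℝ := 1 / (a - 4) ^ 2 with hk_def
      have hcont : ContinuousOn (fun c : ℝ => 1 / (c - 4) + c * k) C := by
        apply ContinuousOn.add
        · exact ContinuousOn.div continuousOn_const (by fun_prop)
            (fun c hc => ne_of_lt (hC4 c hc))
        · fun_prop
      obtain ⟨c₀, hc₀C, hc₀max⟩ := hC.exists_isMaxOn hne hcont
      set M : ℝ := 1 / (c₀ - 4) + c₀ * k with hM_def
      have hMlt : M < 1 / (a - 4) + a * k :=
        paraboloid_key_ineq ha4 (hC4 c₀ hc₀C) (fun h => haC (h ▸ hc₀C))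
      -- the hull lies in the half-space {p | p 0 + p 1 * k ≤ M}
      have hhalf : q 0 + q 1 * k ≤ M := by
        have hconv : Convex ℝ {p : EuclideanSpace ℝ (Fin 3) | p 0 + p 1 * k ≤ M} := by
          intro x hx y hy s t hs ht hst
          simp only [Set.mem_setOf_eq] at *
          simp only [PiLp.add_apply, PiLp.smul_apply, smul_eq_mul]
          have hsum := add_le_add (mul_le_mul_of_nonneg_left hx hs)
            (mul_le_mul_of_nonneg_left hy ht)
          have hM1 : s * M + t * M = M := by rw [← add_mul, hst, one_mul]
          nlinarith [hsum, hM1]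
        have hsub : {q : EuclideanSpace ℝ (Fin 3) | ∃ c ∈ C,
            q 0 = 1 / (c - 4) ∧ q 1 = c ∧ q 2 = c / (c - 4)} ⊆
            {p : EuclideanSpace ℝ (Fin 3) | p 0 + p 1 * k ≤ M} := by
          rintro p ⟨c, hcC, h0, h1, h2⟩
          simp only [Set.mem_setOf_eq, h0, h1]
          exact hc₀max hcC
        exact convexHull_min hsub hconv hq
      rw [hq0] at hhalf
      linarith
    exact ⟨a, haC, hq0, rfl, by rw [hqS, hq0]; ring⟩
  · intro p hp
    refine ⟨subset_convexHull ℝ _ hp, ?_⟩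
    obtain ⟨c, hcC, h0, h1, h2⟩ := hp
    simp only [Set.mem_setOf_eq, h0, h1, h2]
    ring
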